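/- Let q > Δ ≥ 1 be integers, Q a set of q colours, q_0, q_1 ∈ Q distinct, and for 1 ≤ i ≤ Δ let S_i ⊆ Q \ {q_0} with |S_i| ≥ q - Δ, and suppose q_1 ∈ S_1. Let s_i be chosen uniformly and independently from S_i, and let c = |{s_1,...,s_Δ}|. Then E[q - c | s_1 = q_1] ≥ 1 + (q-2)·(1 - 1/(q-Δ))^{(Δ-1)(q-Δ)/(q-2)}. -/

import Mathlib

open Finset

private lemma bern_aux (n c : ℕ) (hn : 2 ≤ n) (hc : n ≤ c) :
    (1 - 1/(n:ℝ)) ^ ((n:ℝ)/c) ≤ ((c:ℝ)-1)/c := by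
  have hn0 : (0:ℝ) < n := by positivity
  have hc0 : (0:ℝ) < c := by exact_mod_cast lt_of_lt_of_le (by positivity) (Nat.cast_le.2 hc)
  have hs : (-1:ℝ) ≤ -(1/(n:ℝ)) := by
    rw [neg_le_neg_iff, div_le_one hn0]
    exact_mod_cast Nat.one_le_iff_ne_zero.2 (by omega)
  have hp1 : (0:ℝ) ≤ (n:ℝ)/c := by positivity
  have hp2 : (n:ℝ)/c ≤ 1 := by rw [div_le_one hc0]; exact_mod_cast hc
  have h := rpow_one_add_le_one_add_mul_self hs hp1 hp2
  calc (1 - 1/(n:ℝ)) ^ ((n:ℝ)/c) = (1 + -(1/(n:ℝ))) ^ ((n:ℝ)/c) := by ring_nf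
    _ ≤ 1 + (n:ℝ)/c * -(1/(n:ℝ)) := h
    _ = ((c:ℝ)-1)/c := by field_simp; ring

theorem stmt10 (q Δ : ℕ) (hΔ : 0 < Δ) (hq : Δ + 2 ≤ q) (hq3 : 3 ≤ q)
    (q₀ q₁ : Fin q) (hne : q₀ ≠ q₁)
    (S : Fin Δ → Finset (Fin q))
    (hS0 : ∀ i, q₀ ∉ S i) (hScard : ∀ i, q - Δ ≤ (S i).card)
    (hq1 : q₁ ∈ S ⟨0, hΔ⟩) :
    1 + ((q : ℝ) - 2) *
        Real.rpow (1 - 1 / ((q : ℝ) - Δ)) (((Δ : ℝ) - 1) * ((q : ℝ) - Δ) / ((q : ℝ) - 2))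
      ≤ (∑ σ ∈ (Fintype.piFinset S).filter (fun σ => σ ⟨0, hΔ⟩ = q₁),
            ((q : ℝ) - (Finset.image σ Finset.univ).card))
          / ((Fintype.piFinset S).filter (fun σ => σ ⟨0, hΔ⟩ = q₁)).card := by
  classical
  set i0 : Fin Δ := ⟨0, hΔ⟩ with hi0
  set n : ℕ := q - Δ with hn
  have hn2 : 2 ≤ n := by omega
  have hnR : (n:ℝ) = (q:ℝ) - Δ := by
    rw [hn, Nat.cast_sub (by omega : Δ ≤ q)]
  have hn0 : (0:ℝ) < n := by positivity
  set x : ℝ := 1 - 1/(n:ℝ) with hxdef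
  have hx0 : 0 < x := by
    have h1 : (1:ℝ)/n < 1 := by
      rw [div_lt_one hn0]; exact_mod_cast lt_of_lt_of_le one_lt_two hn2
    simp only [hxdef]; linarith
  have hx1 : x ≤ 1 := by
    have : (0:ℝ) ≤ 1/n := by positivity
    simp only [hxdef]; linarith
  set S' : Fin Δ → Finset (Fin q) := Function.update S i0 {q₁} with hS'def
  have hS'i0 : S' i0 = {q₁} := Function.update_self _ _ _
  have hS'ne : ∀ i, i ≠ i0 → S' i = S i := fun i hi => Function.update_of_ne hi _ _
  have hcardS' : ∀ i, i ≠ i0 → n ≤ (S' i).card := fun i hi => by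
    rw [hS'ne i hi]; exact hScard i
  have hS'pos : ∀ i, 0 < (S' i).card := by
    intro i
    rcases eq_or_ne i i0 with rfl | hi
    · rw [hS'i0]; simp
    · exact lt_of_lt_of_le (by omega) (hcardS' i hi)
  have hq0S' : ∀ i, q₀ ∉ S' i := by
    intro i
    rcases eq_or_ne i i0 with rfl | hi
    · rw [hS'i0]; simp [hne]
    · rw [hS'ne i hi]; exact hS0 i
  -- Step 1: the filtered set is a piFinset
  have hP : (Fintype.piFinset S).filter (fun σ => σ i0 = q₁) = Fintype.piFinset S' := by
    ext σ
    simp only [mem_filter, Fintype.mem_piFinset]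
    constructor
    · rintro ⟨h, h0⟩ i
      rcases eq_or_ne i i0 with rfl | hi
      · rw [hS'i0]; simp [h0]
      · rw [hS'ne i hi]; exact h i
    · intro h
      have h0 : σ i0 = q₁ := by have := h i0; rwa [hS'i0, mem_singleton] at this
      refine ⟨fun i => ?_, h0⟩
      rcases eq_or_ne i i0 with rfl | hi
      · rw [h0]; exact hq1
      · have := h i; rwa [hS'ne i hi] at this
  rw [hP]
  -- Step 2: numerator as sum over colours
  have hfilterk : ∀ k : Fin q, (Fintype.piFinset S').filter (fun σ => ∀ i, σ i ≠ k)
      = Fintype.piFinset (fun i => (S' i).erase k) := by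
    intro k; ext σ; simp [Fintype.mem_piFinset, forall_and, and_comm]
  have hterm : ∀ σ : Fin Δ → Fin q, ((q : ℝ) - (Finset.image σ Finset.univ).card)
      = ∑ k : Fin q, if ∀ i, σ i ≠ k then (1:ℝ) else 0 := by
    intro σ
    rw [Finset.sum_boole]
    have h1 : Finset.univ.filter (fun k => ∀ i, σ i ≠ k) = (Finset.image σ Finset.univ)ᶜ := by
      ext k; simp [eq_comm]
    rw [h1, Finset.card_compl, Fintype.card_fin]
    have hle := Finset.card_le_univ (Finset.image σ (Finset.univ : Finset (Fin Δ)))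
    rw [Fintype.card_fin] at hle
    push_cast [Nat.cast_sub hle]
    ring
  have hNum : ∑ σ ∈ Fintype.piFinset S', ((q:ℝ) - (Finset.image σ Finset.univ).card)
      = ∑ k : Fin q, ∏ i, (((S' i).erase k).card : ℝ) := by
    calc ∑ σ ∈ Fintype.piFinset S', ((q:ℝ) - (Finset.image σ Finset.univ).card)
        = ∑ σ ∈ Fintype.piFinset S', ∑ k : Fin q, if ∀ i, σ i ≠ k then (1:ℝ) else 0 :=
          Finset.sum_congr rfl (fun σ _ => hterm σ)
      _ = ∑ k : Fin q, ∑ σ ∈ Fintype.piFinset S', if ∀ i, σ i ≠ k then (1:ℝ) else 0 :=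
          Finset.sum_comm
      _ = ∑ k : Fin q, (((Fintype.piFinset S').filter (fun σ => ∀ i, σ i ≠ k)).card : ℝ) := by
          simp [Finset.sum_boole]
      _ = ∑ k : Fin q, ∏ i, (((S' i).erase k).card : ℝ) := by
          refine Finset.sum_congr rfl fun k _ => ?_
          rw [hfilterk k, Fintype.card_piFinset]
          push_cast
          rfl
  -- Step 3: ratio as sum of products of ratios
  set r : Fin q → ℝ := fun k => ∏ i, ((((S' i).erase k).card : ℝ)/((S' i).card : ℝ)) with hrdef
  have hDpos : (0:ℝ) < ∏ i, ((S' i).card : ℝ) := by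
    apply Finset.prod_pos; intro i _; exact_mod_cast hS'pos i
  have hratio : (∑ σ ∈ Fintype.piFinset S', ((q:ℝ) - (Finset.image σ Finset.univ).card))
      / ((Fintype.piFinset S').card : ℝ) = ∑ k : Fin q, r k := by
    have hD : ((Fintype.piFinset S').card : ℝ) = ∏ i, ((S' i).card : ℝ) := by
      rw [Fintype.card_piFinset]; push_cast; rfl
    rw [hNum, hD, Finset.sum_div]
    refine Finset.sum_congr rfl fun k _ => ?_
    simp only [hrdef]
    exact (Finset.prod_div_distrib _ _).symm
  rw [hratio]
  have hxeq : (1 : ℝ) - 1/((q:ℝ) - Δ) = x := by rw [hxdef, hnR]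
  rw [hxeq]
  -- pointwise lower bound
  set A : Fin q → ℝ := fun k => ∑ i, if k ∈ S' i then (n:ℝ)/((S' i).card : ℝ) else 0 with hAdef
  have hApt : ∀ k, k ≠ q₀ → k ≠ q₁ → x ^ (A k) ≤ r k := by
    intro k hk0 hk1
    simp only [hAdef, hrdef]
    rw [Real.rpow_sum_of_pos hx0]
    refine Finset.prod_le_prod (fun i _ => Real.rpow_nonneg hx0.le _) (fun i _ => ?_)
    by_cases hk : k ∈ S' i
    · have hi : i ≠ i0 := by
        intro h; subst h; rw [hS'i0, mem_singleton] at hk; exact hk1 hk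
      have hcle : n ≤ (S' i).card := hcardS' i hi
      rw [if_pos hk, Finset.card_erase_of_mem hk, Nat.cast_sub (hS'pos i)]
      push_cast
      exact bern_aux n _ hn2 hcle
    · rw [if_neg hk, Real.rpow_zero, Finset.erase_eq_of_notMem hk,
        div_self (by exact_mod_cast (hS'pos i).ne' : ((S' i).card : ℝ) ≠ 0)]
  -- the set of "other" colours
  set rest : Finset (Fin q) := ({q₀, q₁} : Finset (Fin q))ᶜ with hrest
  have hmem_rest : ∀ k, k ∈ rest ↔ k ≠ q₀ ∧ k ≠ q₁ := by
    intro k; simp [hrest, not_or]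
  have hrestcard : (rest.card : ℝ) = (q:ℝ) - 2 := by
    rw [hrest, Finset.card_compl, Finset.card_pair hne, Fintype.card_fin,
      Nat.cast_sub (by omega)]
    norm_num
  have hq2 : (0:ℝ) < (q:ℝ) - 2 := by
    have h3 : (3:ℝ) ≤ q := by exact_mod_cast hq3
    linarith
  -- bound on total exponent
  have hAbound : ∑ k ∈ rest, A k ≤ ((Δ:ℝ) - 1) * ((q:ℝ) - Δ) := by
    have hswap : ∑ k ∈ rest, A k
        = ∑ i, ∑ k ∈ rest, (if k ∈ S' i then (n:ℝ)/((S' i).card:ℝ) else 0) := by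
      simp only [hAdef]; exact Finset.sum_comm
    rw [hswap]
    have htermb : ∀ i : Fin Δ, ∑ k ∈ rest, (if k ∈ S' i then (n:ℝ)/((S' i).card:ℝ) else 0)
        ≤ if i = i0 then 0 else (n:ℝ) := by
      intro i
      rw [← Finset.sum_filter, Finset.sum_const, nsmul_eq_mul]
      rcases eq_or_ne i i0 with rfl | hi
      · have hemp : rest.filter (fun k => k ∈ S' i0) = ∅ := by
          rw [Finset.filter_eq_empty_iff]
          intro k hk
          rw [hS'i0, mem_singleton]
          exact ((hmem_rest k).1 hk).2
        rw [hemp]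
        simp
      · rw [if_neg hi]
        have hsub : rest.filter (fun k => k ∈ S' i) ⊆ S' i :=
          fun k hk => (Finset.mem_filter.1 hk).2
        have hcle : ((rest.filter (fun k => k ∈ S' i)).card : ℝ) ≤ ((S' i).card : ℝ) := by
          exact_mod_cast Finset.card_le_card hsub
        have hcpos : (0:ℝ) < ((S' i).card : ℝ) := by exact_mod_cast hS'pos i
        calc ((rest.filter (fun k => k ∈ S' i)).card : ℝ) * ((n:ℝ)/((S' i).card:ℝ))
            ≤ ((S' i).card : ℝ) * ((n:ℝ)/((S' i).card:ℝ)) := by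
              apply mul_le_mul_of_nonneg_right hcle; exact div_nonneg (Nat.cast_nonneg _) (Nat.cast_nonneg _)
          _ = (n:ℝ) := mul_div_cancel₀ _ hcpos.ne'
    calc ∑ i, ∑ k ∈ rest, (if k ∈ S' i then (n:ℝ)/((S' i).card:ℝ) else 0)
        ≤ ∑ i : Fin Δ, (if i = i0 then 0 else (n:ℝ)) :=
          Finset.sum_le_sum fun i _ => htermb i
      _ = ((Δ:ℝ) - 1) * ((q:ℝ) - Δ) := by
          rw [Finset.sum_ite, Finset.sum_const, Finset.sum_const, smul_zero, zero_add,
            Finset.filter_ne', Finset.card_erase_of_mem (Finset.mem_univ _),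
            Finset.card_univ, Fintype.card_fin, nsmul_eq_mul,
            Nat.cast_sub (by omega : 1 ≤ Δ), hnR]
          norm_num
  -- AM-GM
  have hAMGM : ((q:ℝ)-2) * x ^ ((∑ k ∈ rest, A k) / ((q:ℝ)-2)) ≤ ∑ k ∈ rest, x ^ (A k) := by
    have hw1 : ∑ _k ∈ rest, (1/((q:ℝ)-2)) = 1 := by
      rw [Finset.sum_const, nsmul_eq_mul, hrestcard, mul_one_div, div_self hq2.ne']
    have h := Real.geom_mean_le_arith_mean_weighted rest (fun _ => 1/((q:ℝ)-2))
      (fun k => x ^ (A k)) (fun k _ => by positivity) hw1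
      (fun k _ => Real.rpow_nonneg hx0.le _)
    have hL : ∏ k ∈ rest, (x ^ (A k)) ^ (1/((q:ℝ)-2))
        = x ^ ((∑ k ∈ rest, A k) * (1/((q:ℝ)-2))) := by
      calc ∏ k ∈ rest, (x ^ (A k)) ^ (1/((q:ℝ)-2))
          = ∏ k ∈ rest, x ^ (A k * (1/((q:ℝ)-2))) :=
            Finset.prod_congr rfl fun k _ => (Real.rpow_mul hx0.le _ _).symm
        _ = x ^ (∑ k ∈ rest, A k * (1/((q:ℝ)-2))) := (Real.rpow_sum_of_pos hx0 _ _).symm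
        _ = x ^ ((∑ k ∈ rest, A k) * (1/((q:ℝ)-2))) := by rw [← Finset.sum_mul]
    rw [hL, ← Finset.mul_sum, mul_one_div] at h
    have h2 := mul_le_mul_of_nonneg_left h hq2.le
    rwa [← mul_assoc, mul_one_div, div_self hq2.ne', one_mul] at h2
  -- assemble
  have hr0 : r q₀ = 1 := by
    simp only [hrdef]
    refine Finset.prod_eq_one fun i _ => ?_
    rw [Finset.erase_eq_of_notMem (hq0S' i),
      div_self (by exact_mod_cast (hS'pos i).ne' : ((S' i).card : ℝ) ≠ 0)]
  have hrnonneg : ∀ k, 0 ≤ r k := fun k => Finset.prod_nonneg fun i _ => div_nonneg (Nat.cast_nonneg _) (Nat.cast_nonneg _)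
  have hrestle : ∑ k ∈ rest, x ^ (A k) ≤ ∑ k ∈ rest, r k :=
    Finset.sum_le_sum fun k hk => hApt k ((hmem_rest k).1 hk).1 ((hmem_rest k).1 hk).2
  have hsplit : (r q₀ + r q₁) + ∑ k ∈ rest, r k = ∑ k : Fin q, r k := by
    rw [← Finset.sum_pair hne]
    exact Finset.sum_add_sum_compl ({q₀, q₁} : Finset (Fin q)) r
  have hexp : x ^ (((Δ:ℝ)-1) * ((q:ℝ)-Δ) / ((q:ℝ)-2))
      ≤ x ^ ((∑ k ∈ rest, A k) / ((q:ℝ)-2)) := by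
    apply Real.rpow_le_rpow_of_exponent_ge hx0 hx1
    gcongr
  have hrpow : Real.rpow x (((Δ:ℝ)-1) * ((q:ℝ)-Δ) / ((q:ℝ)-2))
      = x ^ (((Δ:ℝ)-1) * ((q:ℝ)-Δ) / ((q:ℝ)-2)) := rfl
  calc 1 + ((q:ℝ)-2) * Real.rpow x (((Δ:ℝ)-1) * ((q:ℝ)-Δ) / ((q:ℝ)-2))
      ≤ 1 + ((q:ℝ)-2) * x ^ ((∑ k ∈ rest, A k) / ((q:ℝ)-2)) := by
        rw [hrpow]
        have := mul_le_mul_of_nonneg_left hexp hq2.le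
        linarith
    _ ≤ 1 + ∑ k ∈ rest, x ^ (A k) := by linarith
    _ ≤ (r q₀ + r q₁) + ∑ k ∈ rest, r k := by
        have := hrnonneg q₁
        rw [hr0]
        linarith
    _ = ∑ k : Fin q, r k := hsplit
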